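/- arXiv:2311.06872 — 4 statements merged into one kernel-verified Lean document; each statement's English description precedes it below -/
import Mathlib

section
/- Let (T,⪯,Σ,S) be an S-tree and f : T → T a shape-preserving function. Then f preserves meets: for all a, b ∈ T with a and b having the same level-0 predecessor, f(a ∧ b) = f(a) ∧ f(b), where a ∧ b denotes the ⪯-maximal common lower bound of a and b. -/
variable {T : Type*} [PartialOrder T] {A : Type*}

/-- The level of a node: the number of its strict predecessors. -/
noncomputable def lvl (a : T) : ℕ := {b : T | b < a}.ncard

/-- `(T, ≤, A, S)` is an S-tree: a countable finitely branching tree with finitely many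
level-0 nodes, together with a partial successor operation `S` (modelled with `Option`)
satisfying axioms (S1), (S2) and (S3). Here `a ⋖ q` means `q` is an immediate successor
of `a`. -/
structure IsSTree (S : T → List T → A → Option T) : Prop where
  countable : Countable T
  pred_finite : ∀ a : T, {b : T | b < a}.Finite
  pred_chain : ∀ a : T, IsChain (· ≤ ·) {b : T | b < a}
  finite_branching : ∀ a : T, {b : T | a ⋖ b}.Finite
  finite_roots : {a : T | lvl a = 0}.Finite
  s1_cov : ∀ (a : T) (p : List T) (c : A) (q : T), S a p c = some q → a ⋖ q
  s1_param : ∀ (a : T) (p : List T) (c : A) (q : T), S a p c = some q →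
    ∀ x ∈ p, lvl x + 1 ≤ lvl a
  s2 : ∀ (a a' : T) (p p' : List T) (c c' : A) (q : T),
    S a p c = some q → S a' p' c' = some q → a = a' ∧ p = p' ∧ c = c'
  s3 : ∀ a b : T, a ⋖ b → ∃ (p : List T) (c : A), S a p c = some b

/-- `F` is a shape-preserving function of the S-tree `(T, ≤, A, S)`: an injection that is
level-preserving, weakly `S`-preserving, and preserves the level-0 predecessor relation. -/
structure IsShapePres (S : T → List T → A → Option T) (F : T → T) : Prop where
  inj : Function.Injective F
  lvl_pres : ∀ a b : T, lvl a = lvl b → lvl (F a) = lvl (F b)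
  weak_S : ∀ (a : T) (p : List T) (c : A) (q : T), S a p c = some q →
    ∃ q' : T, S (F a) (p.map F) c = some q' ∧ q' ≤ F q
  root : ∀ a b : T, lvl a = 0 → a ≤ b → a ≤ F b

/-- `m` is the meet of `a` and `b`: a `≤`-maximal common lower bound of `a` and `b`. -/
def IsMeetOf (m a b : T) : Prop :=
  m ≤ a ∧ m ≤ b ∧ ∀ c : T, m ≤ c → c ≤ a → c ≤ b → c = m

lemma lvl_lt_of_lt (hfin : ∀ a : T, {b : T | b < a}.Finite) {a b : T} (h : a < b) :
    lvl a < lvl b := by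
  apply Set.ncard_lt_ncard _ (hfin b)
  constructor
  · intro x hx; exact lt_trans hx h
  · intro hsub; exact absurd (hsub h) (lt_irrefl a)

lemma comp_below (hchain : ∀ a : T, IsChain (· ≤ ·) {b : T | b < a}) {x y t : T}
    (hx : x ≤ t) (hy : y ≤ t) : x ≤ y ∨ y ≤ x := by
  rcases eq_or_lt_of_le hx with rfl | hx'
  · exact Or.inr hy
  rcases eq_or_lt_of_le hy with rfl | hy'
  · exact Or.inl hx'.le
  by_cases hne : x = y
  · exact Or.inl (le_of_eq hne)
  · exact hchain t hx' hy' hne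

lemma exists_cov (hfin : ∀ a : T, {b : T | b < a}.Finite) {a b : T} (h : a < b) :
    ∃ u : T, a ⋖ u ∧ u ≤ b := by
  have hfinS : ({x : T | a < x ∧ x ≤ b}).Finite := by
    apply Set.Finite.subset ((hfin b).insert b)
    intro x hx
    rcases eq_or_lt_of_le hx.2 with rfl | h'
    · exact Set.mem_insert _ _
    · exact Set.mem_insert_of_mem _ h'
  obtain ⟨u, huS, hmin⟩ : ∃ u ∈ {x : T | a < x ∧ x ≤ b},
      ∀ z ∈ {x : T | a < x ∧ x ≤ b}, id z ≤ id u → id u = id z := by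
    obtain ⟨u, huS, hmin⟩ := Set.Finite.exists_minimalFor id _ hfinS ⟨b, h, le_rfl⟩
    exact ⟨u, huS, fun z hz hzu => le_antisymm (hmin hz hzu) hzu⟩
  refine ⟨u, ⟨huS.1, ?_⟩, huS.2⟩
  intro z hz1 hz2
  have := hmin z ⟨hz1, hz2.le.trans huS.2⟩ hz2.le
  simp only [id] at this
  subst this
  exact lt_irrefl _ hz2

lemma mono_aux {S : T → List T → A → Option T} (hS : IsSTree S)
    {f : T → T} (hf : IsShapePres S f) :
    ∀ n, ∀ a b : T, lvl b - lvl a = n → a ≤ b → f a ≤ f b := by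
  intro n
  induction n using Nat.strong_induction_on with
  | _ n ih =>
    intro a b hn hab
    rcases eq_or_lt_of_le hab with rfl | h
    · exact le_rfl
    obtain ⟨u, hcov, hub⟩ := exists_cov hS.pred_finite h
    obtain ⟨p, c, hpc⟩ := hS.s3 a u hcov
    obtain ⟨q, hq, hqu⟩ := hf.weak_S a p c u hpc
    have h1 : f a ≤ f u := le_trans (hS.s1_cov _ _ _ _ hq).le hqu
    have h2 : f u ≤ f b := by
      subst hn
      exact ih (lvl b - lvl u)
        (Nat.sub_lt_sub_left (lvl_lt_of_lt hS.pred_finite h)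
          (lvl_lt_of_lt hS.pred_finite hcov.lt)) u b rfl hub
    exact h1.trans h2

lemma mono_of_shapePres {S : T → List T → A → Option T} (hS : IsSTree S)
    {f : T → T} (hf : IsShapePres S f) {a b : T} (hab : a ≤ b) : f a ≤ f b :=
  mono_aux hS hf _ a b rfl hab

/-- a shape-preserving function of an S-tree preserves meets: for nodes `a`, `b`
having a common level-0 predecessor, `f(a ∧ b) = f(a) ∧ f(b)`. -/
theorem stmt_3 (S : T → List T → A → Option T) (hS : IsSTree S)
    (f : T → T) (hf : IsShapePres S f) :
    ∀ a b m m' : T, (∃ r : T, lvl r = 0 ∧ r ≤ a ∧ r ≤ b) →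
      IsMeetOf m a b → IsMeetOf m' (f a) (f b) → f m = m' := by
  intro a b m m' _ hm hm'
  obtain ⟨hma, hmb, hmax⟩ := hm
  obtain ⟨hm'a, hm'b, hmax'⟩ := hm'
  have hfm_a : f m ≤ f a := mono_of_shapePres hS hf hma
  have hfm_b : f m ≤ f b := mono_of_shapePres hS hf hmb
  rcases comp_below hS.pred_chain hfm_a hm'a with hle | hle
  · rcases eq_or_lt_of_le hle with heq | hlt
    · exact heq
    exfalso
    have hma' : m < a := by
      rcases eq_or_lt_of_le hma with rfl | h
      · exact absurd hm'a hlt.not_ge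
      · exact h
    have hmb' : m < b := by
      rcases eq_or_lt_of_le hmb with rfl | h
      · exact absurd hm'b hlt.not_ge
      · exact h
    obtain ⟨u, hcu, hua⟩ := exists_cov hS.pred_finite hma'
    obtain ⟨v, hcv, hvb⟩ := exists_cov hS.pred_finite hmb'
    have huv : u ≠ v := fun e => hcu.lt.ne' (hmax u hcu.le hua (e ▸ hvb))
    obtain ⟨p, c, hpc⟩ := hS.s3 m u hcu
    obtain ⟨p', c', hpc'⟩ := hS.s3 m v hcv
    obtain ⟨q, hq, hqu⟩ := hf.weak_S m p c u hpc
    obtain ⟨q', hq', hq'v⟩ := hf.weak_S m p' c' v hpc'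
    have hcq : f m ⋖ q := hS.s1_cov _ _ _ _ hq
    have hcq' : f m ⋖ q' := hS.s1_cov _ _ _ _ hq'
    have hqq' : q ≠ q' := by
      intro e
      obtain ⟨-, hp, hc⟩ := hS.s2 (f m) (f m) (p.map f) (p'.map f) c c' q hq (e ▸ hq')
      have hpp : p = p' := List.map_injective_iff.mpr hf.inj hp
      subst hpp; subst hc
      rw [hpc] at hpc'
      exact huv (Option.some.inj hpc')
    have hqfa : q ≤ f a := hqu.trans (mono_of_shapePres hS hf hua)
    have hq'fb : q' ≤ f b := hq'v.trans (mono_of_shapePres hS hf hvb)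
    have hqm' : q ≤ m' := by
      rcases comp_below hS.pred_chain hqfa hm'a with h1 | h1
      · exact h1
      · rcases eq_or_lt_of_le h1 with rfl | h2
        · exact le_rfl
        · exact absurd h2 (hcq.2 hlt)
    have hq'm' : q' ≤ m' := by
      rcases comp_below hS.pred_chain hq'fb hm'b with h1 | h1
      · exact h1
      · rcases eq_or_lt_of_le h1 with rfl | h2
        · exact le_rfl
        · exact absurd h2 (hcq'.2 hlt)
    rcases comp_below hS.pred_chain hqm' hq'm' with h1 | h1
    · rcases eq_or_lt_of_le h1 with e | h2
      · exact hqq' e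
      · exact hcq'.2 hcq.lt h2
    · rcases eq_or_lt_of_le h1 with e | h2
      · exact hqq' e.symm
      · exact hcq.2 hcq'.lt h2
  · exact hmax' (f m) hle hfm_a hfm_b
end

section
/- For every finite alphabet Σ and positive integer r there exists N such that for every r-colouring χ of the set Σ^{≤N} of words of length at most N there exists a combinatorial line L of length at most N that is χ-monochromatic together with its star-truncation; that is, χ is constant on the set {L(c) : c ∈ Σ} ∪ {L(*)}, where L(c) is the word obtained by substituting c for every occurrence of the parameter λ in L, and L(*) is the initial segment of L preceding the first occurrence of λ. -/
/-- Words over `Σ ∪ {λ}` are modelled as lists of `Option Σ`, with `none` playing the role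
of the parameter `λ`. For a combinatorial line `L` (a word in which `none` occurs),
`L(c)` substitutes `c` for every occurrence of the parameter. -/
def lineSubst {A : Type*} (L : List (Option A)) (c : A) : List A :=
  L.map (fun x => x.getD c)

/-- `L(*)`: the initial segment of `L` preceding the first occurrence of the parameter. -/
def lineStar {A : Type*} [Inhabited A] (L : List (Option A)) : List A :=
  (L.takeWhile Option.isSome).map (fun x => x.getD default)

private lemma takeWhile_append_all {α : Type*} (p : α → Bool) (l₁ l₂ : List α)
    (h : ∀ x ∈ l₁, p x = true) : (l₁ ++ l₂).takeWhile p = l₁ ++ l₂.takeWhile p := by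
  induction l₁ with
  | nil => simp
  | cons a t ih =>
    have ha : p a = true := h a List.mem_cons_self
    simp only [List.cons_append, List.takeWhile_cons, ha, if_true]
    rw [ih fun x hx => h x (List.mem_cons_of_mem _ hx)]

private lemma takeWhile_append_stop {α : Type*} (p : α → Bool) (l₁ l₂ : List α)
    (h : ∃ x ∈ l₁, ¬ p x = true) : (l₁ ++ l₂).takeWhile p = l₁.takeWhile p := by
  induction l₁ with
  | nil => simp at h
  | cons a t ih =>
    by_cases ha : p a = true
    · have ht : ∃ x ∈ t, ¬ p x = true := by
        rcases h with ⟨x, hx, hpx⟩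
        rcases List.mem_cons.mp hx with rfl | hxt
        · exact absurd ha hpx
        · exact ⟨x, hxt, hpx⟩
      simp only [List.cons_append, List.takeWhile_cons, ha, if_true]
      rw [ih ht]
    · simp [List.takeWhile_cons, ha]

private lemma lineSubst_append {A : Type*} (L₁ L₂ : List (Option A)) (c : A) :
    lineSubst (L₁ ++ L₂) c = lineSubst L₁ c ++ lineSubst L₂ c := by
  simp [lineSubst]

private lemma lineSubst_map_some {A : Type*} (z : List A) (c : A) :
    lineSubst (z.map some) c = z := by
  simp [lineSubst, List.map_map, Function.comp_def]

private lemma lineSubst_length {A : Type*} (L : List (Option A)) (c : A) :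
    (lineSubst L c).length = L.length := by simp [lineSubst]

private lemma lineStar_append_of_none {A : Type*} [Inhabited A] (L₁ L₂ : List (Option A))
    (h : none ∈ L₁) : lineStar (L₁ ++ L₂) = lineStar L₁ := by
  unfold lineStar
  rw [takeWhile_append_stop _ _ _ ⟨none, h, by simp⟩]

private lemma lineStar_map_some_append {A : Type*} [Inhabited A] (z : List A)
    (L : List (Option A)) : lineStar (z.map some ++ L) = z ++ lineStar L := by
  unfold lineStar
  rw [takeWhile_append_all _ _ _ (by simp), List.map_append, List.map_map]
  simp [Function.comp_def]

private lemma lineStar_length_le {A : Type*} [Inhabited A] (L : List (Option A)) :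
    (lineStar L).length ≤ L.length := by
  simpa [lineStar] using (List.takeWhile_sublist (l := L) Option.isSome).length_le

private lemma star_hj (A : Type*) [Fintype A] [Inhabited A] (r : ℕ) :
    ∃ N : ℕ, ∀ χ : List A → Fin r,
      ∃ L : List (Option A), L.length ≤ N ∧ none ∈ L ∧
        ∃ col : Fin r,
          (∀ c : A, χ (lineSubst L c) = col) ∧ χ (lineStar L) = col := by
  induction r with
  | zero => exact ⟨0, fun χ => (χ []).elim0⟩
  | succ r IH =>
    obtain ⟨N', ih⟩ := IH
    haveI : Finite {z : List A // z.length ≤ N'} :=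
      (List.finite_length_le (α := A) (n := N')).to_subtype
    obtain ⟨ι, ιfin, hHJ⟩ :=
      Combinatorics.Line.exists_mono_in_high_dimension A
        ({z : List A // z.length ≤ N'} → Fin (r + 1))
    haveI := ιfin
    set e : ι ≃ Fin (Fintype.card ι) := Fintype.equivFin ι with he
    refine ⟨Fintype.card ι + N', fun χ => ?_⟩
    obtain ⟨l, Φ, hΦ⟩ := hHJ (fun w z => χ ((List.ofFn fun i => w (e.symm i)) ++ z.val))
    set Lidx : List (Option A) := List.ofFn (fun i => l.idxFun (e.symm i)) with hLidx
    have hlen : Lidx.length = Fintype.card ι := List.length_ofFn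
    have hnone : none ∈ Lidx := by
      obtain ⟨i, hi⟩ := l.proper
      rw [hLidx, List.mem_ofFn]
      exact ⟨e i, by simp [hi]⟩
    have hsubst : ∀ x : A, (List.ofFn fun i => (l x) (e.symm i)) = lineSubst Lidx x := by
      intro x
      rw [lineSubst, hLidx, List.map_ofFn]
      rfl
    have hmono : ∀ (x : A) (z : List A) (hz : z.length ≤ N'),
        χ (lineSubst Lidx x ++ z) = Φ ⟨z, hz⟩ := by
      intro x z hz
      have h := congrFun (hΦ x) ⟨z, hz⟩
      rw [← hsubst x]
      exact h
    by_cases hc : ∃ z : {z : List A // z.length ≤ N'}, Φ z = χ (lineStar Lidx)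
    · -- Case 1: the colour of the star `F` of the HJ line is realized by `Φ`.
      obtain ⟨⟨z, hz⟩, hzΦ⟩ := hc
      refine ⟨Lidx ++ z.map some, ?_, List.mem_append.mpr (Or.inl hnone),
        χ (lineStar Lidx), ?_, ?_⟩
      · rw [List.length_append, hlen, List.length_map]
        omega
      · intro c
        rw [lineSubst_append, lineSubst_map_some, hmono c z hz, hzΦ]
      · rw [lineStar_append_of_none _ _ hnone]
    · -- Case 2: `Φ` misses the colour `χ (lineStar Lidx)`; recurse with `r` colours.
      have hr1 : 0 < r := by
        rcases Nat.eq_zero_or_pos r with h0 | h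
        · exfalso
          subst h0
          exact hc ⟨⟨[], by simp⟩, Fin.ext (by omega)⟩
        · exact h
      set v : Fin (r + 1) := χ (lineStar Lidx) with hv
      have hΦne : ∀ (z : List A) (hz : z.length ≤ N'), Φ ⟨z, hz⟩ ≠ v :=
        fun z hz h => hc ⟨⟨z, hz⟩, h⟩
      set g : Fin (r + 1) → Fin r := fun k =>
        if hk : k = v then ⟨0, hr1⟩ else (Fin.exists_succAbove_eq hk).choose with hg
      have hgspec : ∀ (k : Fin (r + 1)) (hk : k ≠ v), v.succAbove (g k) = k := by
        intro k hk
        rw [hg]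
        simp only [dif_neg hk]
        exact (Fin.exists_succAbove_eq hk).choose_spec
      set χ' : List A → Fin r := fun z =>
        if hz : z.length ≤ N' then g (Φ ⟨z, hz⟩) else ⟨0, hr1⟩ with hχ'
      have hχ'spec : ∀ (z : List A) (hz : z.length ≤ N'),
          v.succAbove (χ' z) = Φ ⟨z, hz⟩ := by
        intro z hz
        rw [hχ']
        simp only [dif_pos hz]
        exact hgspec _ (hΦne z hz)
      obtain ⟨L', hL'len, hL'none, col', hsub', hstar'⟩ := ih χ'
      refine ⟨(lineSubst Lidx default).map some ++ L', ?_,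
        List.mem_append.mpr (Or.inr hL'none), v.succAbove col', ?_, ?_⟩
      · rw [List.length_append, List.length_map, lineSubst_length, hlen]
        omega
      · intro c
        have h2 : (lineSubst L' c).length ≤ N' := by
          rw [lineSubst_length]; exact hL'len
        rw [lineSubst_append, lineSubst_map_some, hmono default _ h2, ← hχ'spec _ h2,
          hsub' c]
      · have h2 : (lineStar L').length ≤ N' := le_trans (lineStar_length_le L') hL'len
        rw [lineStar_map_some_append, hmono default _ h2, ← hχ'spec _ h2, hstar']

/-- 1-dimensional `*`-version of the Hales–Jewett theorem: for every finite
alphabet `Σ` and every `r > 0` there is `N` such that every `r`-colouring of the words of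
length at most `N` admits a combinatorial line `L` of length at most `N` with
`{L(c) : c ∈ Σ} ∪ {L(*)}` monochromatic. -/
theorem stmt_10 (A : Type*) [Fintype A] [Inhabited A] (r : ℕ) (hr : 0 < r) :
    ∃ N : ℕ, ∀ χ : List A → Fin r,
      ∃ L : List (Option A), L.length ≤ N ∧ none ∈ L ∧
        ∃ col : Fin r,
          (∀ c : A, χ (lineSubst L c) = col) ∧ χ (lineStar L) = col := by
  exact star_hj A r
end

section
/- Let Σ be a finite alphabet with at least two elements, and let F : Σ^{<ω} → Σ^{<ω} be a shape-preserving function lying in the monoid M_{E^CS} (that is, for every level ℓ skipped by F there exists a unique earlier level n ∈ F̃[ω] such that for every word a with |F(a)| > ℓ, the letter of F(a) at index ℓ equals the letter of F(a) at index n). Define a relation E_F on ω by declaring ℓ ∼ ℓ′ if ℓ, ℓ′ are skipped by F and associated with the same level n ∈ F̃[ω], or if one of them lies in F̃[ω] and is the level associated with the other, or ℓ = ℓ′. Then E_F is an equivalence relation on ω each of whose classes has its minimal element in F̃[ω], and the assignment F ↦ E_F is a bijection between M_{E^CS} and the set of equivalence relations on ω all of whose classes have their minimum in the image of the corresponding level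 map. -/
/-- `F : Σ^{<ω} → Σ^{<ω}` is level-preserving. -/
def LevelPres {A : Type*} (F : List A → List A) : Prop :=
  ∀ a b : List A, a.length = b.length → (F a).length = (F b).length

/-- `F` preserves passing numbers (the induced level map `F̃` is represented via a witness
`b` of length `ℓ`: `F̃(ℓ) = |F b|`). -/
def PassingPres {A : Type*} [Inhabited A] (F : List A → List A) : Prop :=
  ∀ (a : List A) (ℓ : ℕ), ℓ < a.length → ∀ b : List A, b.length = ℓ →
    (F b).length < (F a).length ∧ (F a).getD (F b).length default = a.getD ℓ default

/-- A shape-preserving function of the tree `(Σ^{<ω}, ⊑)`. -/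
def ShapePresW {A : Type*} [Inhabited A] (F : List A → List A) : Prop :=
  Function.Injective F ∧ LevelPres F ∧ PassingPres F

/-- The image `F̃[ω]` of the induced level map of `F`: the set of levels not skipped. -/
def lvlImage {A : Type*} (F : List A → List A) : Set ℕ :=
  {ℓ : ℕ | ∃ b : List A, (F b).length = ℓ}

/-- `n` is the (earlier, non-skipped) level associated to the level `ℓ`: `n ∈ F̃[ω]`,
`n < ℓ`, and for every word `a` with `|F a| > ℓ`, the letter of `F a` at index `ℓ`
equals its letter at index `n`. -/
def Assoc {A : Type*} [Inhabited A] (F : List A → List A) (ℓ n : ℕ) : Prop :=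
  n ∈ lvlImage F ∧ n < ℓ ∧
    ∀ a : List A, ℓ < (F a).length → (F a).getD ℓ default = (F a).getD n default

/-- The monoid `M_{E^CS}`: shape-preserving functions such that every skipped level has a
unique associated earlier non-skipped level which it copies. -/
def MCS (A : Type*) [Inhabited A] : Set (List A → List A) :=
  {F | ShapePresW F ∧ ∀ ℓ : ℕ, ℓ ∉ lvlImage F → ∃! n : ℕ, Assoc F ℓ n}

/-- The relation `E_F` on `ω`: `ℓ ∼ ℓ'` iff `ℓ = ℓ'`, or both are skipped and have the same
associated level, or one lies in `F̃[ω]` and is the level associated to the other. -/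
def EF {A : Type*} [Inhabited A] (F : List A → List A) (ℓ ℓ' : ℕ) : Prop :=
  ℓ = ℓ' ∨
  (ℓ ∉ lvlImage F ∧ ℓ' ∉ lvlImage F ∧ ∃ n : ℕ, Assoc F ℓ n ∧ Assoc F ℓ' n) ∨
  (ℓ ∈ lvlImage F ∧ Assoc F ℓ' ℓ) ∨
  (ℓ' ∈ lvlImage F ∧ Assoc F ℓ ℓ')

section General
variable {A : Type*} [Inhabited A] {F : List A → List A}

/-- The induced level map. -/
noncomputable def tld (F : List A → List A) (k : ℕ) : ℕ :=
  (F (List.replicate k (default : A))).length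

lemma len_eq (hF : LevelPres F) (a : List A) : (F a).length = tld F a.length :=
  hF a _ (by simp)

lemma tld_mono (hF : ShapePresW F) : StrictMono (tld F) := by
  intro j k hjk
  have := (hF.2.2 (List.replicate k default) j (by simpa) (List.replicate j default) (by simp)).1
  simpa [tld] using this

lemma pass (hF : ShapePresW F) (a : List A) {j : ℕ} (hj : j < a.length) :
    (F a).getD (tld F j) default = a.getD j default :=
  (hF.2.2 a j hj (List.replicate j default) (by simp)).2

lemma img_eq (hF : ShapePresW F) : lvlImage F = Set.range (tld F) := by
  ext ℓ
  constructor
  · rintro ⟨b, rfl⟩; exact ⟨b.length, (len_eq hF.2.1 b).symm⟩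
  · rintro ⟨k, rfl⟩; exact ⟨List.replicate k default, rfl⟩

lemma not_assoc_of_mem {A : Type*} [Inhabited A] [Fintype A] (hA : 2 ≤ Fintype.card A)
    {F : List A → List A} (hF : ShapePresW F) {ℓ : ℕ} (hl : ℓ ∈ lvlImage F) (n : ℕ) :
    ¬ Assoc F ℓ n := by
  rintro ⟨hn, hnl, hcopy⟩
  rw [img_eq hF] at hl hn
  obtain ⟨k, rfl⟩ := hl
  obtain ⟨j, rfl⟩ := hn
  have hjk : j < k := (tld_mono hF).lt_iff_lt.mp hnl
  obtain ⟨x, y, hxy⟩ := Fintype.exists_pair_of_one_lt_card (by omega : 1 < Fintype.card A)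
  set a : List A := (List.replicate (k+1) x).set j y with ha
  have hlen : a.length = k + 1 := by simp [ha]
  have hlt : tld F k < (F a).length := by
    rw [len_eq hF.2.1, hlen]; exact tld_mono hF (Nat.lt_succ_self k)
  have h1 : (F a).getD (tld F k) default = a.getD k default := pass hF a (by omega)
  have h2 : (F a).getD (tld F j) default = a.getD j default := pass hF a (by omega)
  have h3 := hcopy a hlt
  rw [h1, h2] at h3
  have hak : a.getD k default = x := by
    rw [List.getD_eq_getElem _ _ (by omega)]
    simp only [ha, List.getElem_set, List.getElem_replicate, if_neg (by omega : ¬ j = k)]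
  have haj : a.getD j default = y := by
    rw [List.getD_eq_getElem _ _ (by omega)]
    simp [ha]
  rw [hak, haj] at h3
  exact hxy h3

end General

section MCSsec
variable {A : Type*} [Inhabited A] [Fintype A]

/-- canonical representative: itself if in image, else the associated level. -/
noncomputable def gmap (F : List A → List A) (hF : F ∈ MCS A) (ℓ : ℕ) : ℕ :=
  @dite _ (ℓ ∈ lvlImage F) (Classical.dec _) (fun _ => ℓ) (fun h => (hF.2 ℓ h).exists.choose)

set_option linter.unusedSectionVars false
variable {F : List A → List A} (hF : F ∈ MCS A)

lemma gmap_of_mem {ℓ : ℕ} (h : ℓ ∈ lvlImage F) : gmap F hF ℓ = ℓ := by rw [gmap, dif_pos h]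

lemma gmap_assoc {ℓ : ℕ} (h : ℓ ∉ lvlImage F) : Assoc F ℓ (gmap F hF ℓ) := by
  rw [gmap, dif_neg h]; exact (hF.2 ℓ h).exists.choose_spec

lemma gmap_unique {ℓ n : ℕ} (h : ℓ ∉ lvlImage F) (hn : Assoc F ℓ n) : n = gmap F hF ℓ := by
  obtain ⟨m, hm, hu⟩ := hF.2 ℓ h
  rw [hu n hn, hu _ (gmap_assoc hF h)]

lemma gmap_mem (ℓ : ℕ) : gmap F hF ℓ ∈ lvlImage F := by
  by_cases h : ℓ ∈ lvlImage F
  · rwa [gmap_of_mem hF h]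
  · exact (gmap_assoc hF h).1

lemma gmap_le (ℓ : ℕ) : gmap F hF ℓ ≤ ℓ := by
  by_cases h : ℓ ∈ lvlImage F
  · rw [gmap_of_mem hF h]
  · exact (gmap_assoc hF h).2.1.le

lemma gmap_idem (ℓ : ℕ) : gmap F hF (gmap F hF ℓ) = gmap F hF ℓ :=
  gmap_of_mem hF (gmap_mem hF ℓ)

lemma EF_iff (hA : 2 ≤ Fintype.card A) (ℓ ℓ' : ℕ) :
    EF F ℓ ℓ' ↔ gmap F hF ℓ = gmap F hF ℓ' := by
  constructor
  · rintro (rfl | ⟨h1, h2, n, hn1, hn2⟩ | ⟨h1, h2⟩ | ⟨h1, h2⟩)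
    · rfl
    · rw [← gmap_unique hF h1 hn1, ← gmap_unique hF h2 hn2]
    · have h3 : ℓ' ∉ lvlImage F := fun hm => not_assoc_of_mem hA hF.1 hm ℓ h2
      rw [gmap_of_mem hF h1, ← gmap_unique hF h3 h2]
    · have h3 : ℓ ∉ lvlImage F := fun hm => not_assoc_of_mem hA hF.1 hm ℓ' h2
      rw [gmap_of_mem hF h1, ← gmap_unique hF h3 h2]
  · intro hg
    by_cases h1 : ℓ ∈ lvlImage F <;> by_cases h2 : ℓ' ∈ lvlImage F
    · left; rw [← gmap_of_mem hF h1, ← gmap_of_mem hF h2, hg]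
    · right; right; left
      refine ⟨h1, ?_⟩
      have := gmap_assoc hF h2
      rwa [← hg, gmap_of_mem hF h1] at this
    · right; right; right
      refine ⟨h2, ?_⟩
      have := gmap_assoc hF h1
      rwa [hg, gmap_of_mem hF h2] at this
    · right; left
      exact ⟨h1, h2, gmap F hF ℓ, gmap_assoc hF h1, hg ▸ gmap_assoc hF h2⟩

lemma EF_gmap (ℓ : ℕ) : EF F ℓ (gmap F hF ℓ) := by
  by_cases h : ℓ ∈ lvlImage F
  · left; rw [gmap_of_mem hF h]
  · right; right; right; exact ⟨gmap_mem hF ℓ, gmap_assoc hF h⟩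

lemma part1 (hF : F ∈ MCS A) (hA : 2 ≤ Fintype.card A) :
    Equivalence (EF F) ∧
      ∀ ℓ : ℕ, ∃ n : ℕ, EF F ℓ n ∧ n ∈ lvlImage F ∧ ∀ k : ℕ, EF F ℓ k → n ≤ k := by
  constructor
  · constructor
    · intro ℓ; left; rfl
    · intro ℓ ℓ' h; rw [EF_iff hF hA] at h ⊢; omega
    · intro a b c h1 h2; rw [EF_iff hF hA] at h1 h2 ⊢; omega
  · intro ℓ
    refine ⟨gmap F hF ℓ, EF_gmap hF ℓ, gmap_mem hF ℓ, fun k hk => ?_⟩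
    rw [EF_iff hF hA] at hk
    calc gmap F hF ℓ = gmap F hF k := hk
    _ ≤ k := gmap_le hF k

lemma mem_img_iff_min (hF : F ∈ MCS A) (hA : 2 ≤ Fintype.card A) (ℓ : ℕ) :
    ℓ ∈ lvlImage F ↔ ∀ k, EF F ℓ k → ℓ ≤ k := by
  constructor
  · intro h k hk
    rw [EF_iff hF hA] at hk
    calc ℓ = gmap F hF ℓ := (gmap_of_mem hF h).symm
    _ = gmap F hF k := hk
    _ ≤ k := gmap_le hF k
  · intro h
    by_contra hm
    have h1 := h _ (EF_gmap hF ℓ)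
    have h2 := (gmap_assoc hF hm).2.1
    omega

end MCSsec

section Inj
variable {A : Type*} [Inhabited A] [Fintype A]
set_option linter.unusedSectionVars false

lemma letter_eq {F : List A → List A} (hF : F ∈ MCS A) (a : List A) {m j : ℕ}
    (hm : m < (F a).length) (hj : tld F j = gmap F hF m) :
    (F a).getD m default = a.getD j default := by
  have hja : j < a.length := by
    have h1 : tld F j ≤ m := hj ▸ gmap_le hF m
    have h2 : m < tld F a.length := by rwa [← len_eq hF.1.2.1]
    exact (tld_mono hF.1).lt_iff_lt.mp (by omega)
  by_cases h : m ∈ lvlImage F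
  · rw [gmap_of_mem hF h] at hj
    rw [← hj]; exact pass hF.1 a hja
  · rw [(gmap_assoc hF h).2.2 a hm, ← hj]
    exact pass hF.1 a hja

lemma part2 (hA : 2 ≤ Fintype.card A) {F G : List A → List A} (hF : F ∈ MCS A)
    (hG : G ∈ MCS A) (h : ∀ ℓ ℓ' : ℕ, EF F ℓ ℓ' ↔ EF G ℓ ℓ') : F = G := by
  have himg : lvlImage F = lvlImage G := by
    ext ℓ
    rw [mem_img_iff_min hF hA, mem_img_iff_min hG hA]
    constructor <;> intro hh k hk
    · exact hh k ((h ℓ k).mpr hk)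
    · exact hh k ((h ℓ k).mp hk)
  have htld : tld F = tld G := by
    rw [← StrictMono.range_inj (tld_mono hF.1) (tld_mono hG.1),
      ← img_eq hF.1, ← img_eq hG.1, himg]
  have hg : ∀ ℓ, gmap F hF ℓ = gmap G hG ℓ := by
    intro ℓ
    have h1 : EF G ℓ (gmap F hF ℓ) := (h _ _).mp (EF_gmap hF ℓ)
    rw [EF_iff hG hA] at h1
    rw [h1, gmap_of_mem hG (himg ▸ gmap_mem hF ℓ)]
  funext a
  have hlen : (F a).length = (G a).length := by
    rw [len_eq hF.1.2.1, len_eq hG.1.2.1, htld]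
  apply List.ext_getElem hlen
  intro m h1 h2
  obtain ⟨j, hj⟩ : gmap F hF m ∈ Set.range (tld F) :=
    (img_eq hF.1) ▸ gmap_mem hF m
  have e1 := letter_eq hF a h1 hj
  have e2 := letter_eq hG a h2 (by rw [← htld, hj, hg])
  rw [List.getD_eq_getElem _ _ h1] at e1
  rw [List.getD_eq_getElem _ _ h2] at e2
  rw [e1, e2]

end Inj

section Surj
set_option linter.unusedSectionVars false
variable (E : ℕ → ℕ → Prop)

/-- the predicate of being minimal in one's class -/
def pE : ℕ → Prop := fun n => ∀ k, E n k → n ≤ k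

variable (hE : Equivalence E)

/-- min of the E-class of ℓ -/
noncomputable def hc (ℓ : ℕ) : ℕ :=
  @Nat.find (fun k => E ℓ k) (Classical.decPred _) ⟨ℓ, hE.refl ℓ⟩

noncomputable def cnt (n : ℕ) : ℕ := @Nat.count (pE E) (Classical.decPred _) n

lemma hc_rel (ℓ : ℕ) : E ℓ (hc E hE ℓ) := @Nat.find_spec _ (Classical.decPred _) _

lemma hc_min {ℓ k : ℕ} (h : E ℓ k) : hc E hE ℓ ≤ k :=
  @Nat.find_min' _ (Classical.decPred _) _ _ h

lemma hc_le (ℓ : ℕ) : hc E hE ℓ ≤ ℓ := hc_min E hE (hE.refl ℓ)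

lemma hc_pE (ℓ : ℕ) : pE E (hc E hE ℓ) := by
  intro k hk
  exact hc_min E hE (hE.trans (hc_rel E hE ℓ) hk)

lemma hc_of_pE {n : ℕ} (h : pE E n) : hc E hE n = n :=
  le_antisymm (hc_le E hE n) (h _ (hc_rel E hE n))

lemma hc_congr {ℓ ℓ' : ℕ} (h : E ℓ ℓ') : hc E hE ℓ = hc E hE ℓ' :=
  le_antisymm (hc_min E hE (hE.trans h (hc_rel E hE ℓ')))
    (hc_min E hE (hE.trans (hE.symm h) (hc_rel E hE ℓ)))

variable (A : Type*) [Inhabited A]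

noncomputable def FE : List A → List A :=
  fun a => (List.range (Nat.nth (pE E) a.length)).map
    (fun m => a.getD (cnt E (hc E hE m)) default)

lemma hpE (hp : (Set.Infinite {n : ℕ | ∀ k : ℕ, E n k → n ≤ k})) : (setOf (pE E)).Infinite := hp

lemma cnt_nth (hp : (Set.Infinite {n : ℕ | ∀ k : ℕ, E n k → n ≤ k})) (j : ℕ) : cnt E (Nat.nth (pE E) j) = j :=
  @Nat.count_nth_of_infinite _ (Classical.decPred _) (hpE E hp) j

lemma nth_cnt {n : ℕ} (h : pE E n) : Nat.nth (pE E) (cnt E n) = n :=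
  @Nat.nth_count _ (Classical.decPred _) _ h

lemma FE_len (a : List A) : (FE E hE A a).length = Nat.nth (pE E) a.length := by
  simp [FE]

lemma FE_getD (a : List A) {m : ℕ} (hm : m < Nat.nth (pE E) a.length) :
    (FE E hE A a).getD m default = a.getD (cnt E (hc E hE m)) default := by
  rw [List.getD_eq_getElem _ _ (by rw [FE_len]; exact hm)]
  simp [FE]

lemma cnt_hc_lt (hp : (Set.Infinite {n : ℕ | ∀ k : ℕ, E n k → n ≤ k})) (a : List A) {m : ℕ} (hm : m < Nat.nth (pE E) a.length) :
    cnt E (hc E hE m) < a.length := by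
  have h1 : Nat.nth (pE E) (cnt E (hc E hE m)) = hc E hE m := nth_cnt E (hc_pE E hE m)
  have h2 : hc E hE m ≤ m := hc_le E hE m
  by_contra hcon
  have := (Nat.nth_le_nth (hpE E hp)).mpr (le_of_not_gt hcon)
  omega

lemma FE_getD_nth (hp : (Set.Infinite {n : ℕ | ∀ k : ℕ, E n k → n ≤ k})) (a : List A) {j : ℕ} (hj : j < a.length) :
    (FE E hE A a).getD (Nat.nth (pE E) j) default = a.getD j default := by
  have h1 : Nat.nth (pE E) j < Nat.nth (pE E) a.length :=
    (Nat.nth_lt_nth (hpE E hp)).mpr hj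
  rw [FE_getD E hE A a h1, hc_of_pE E hE (Nat.nth_mem_of_infinite (hpE E hp) j),
    cnt_nth E hp j]

lemma FE_img (hp : (Set.Infinite {n : ℕ | ∀ k : ℕ, E n k → n ≤ k})) : lvlImage (FE E hE A) = setOf (pE E) := by
  ext ℓ
  constructor
  · rintro ⟨b, hb⟩
    rw [FE_len] at hb
    exact hb ▸ Nat.nth_mem_of_infinite (hpE E hp) b.length
  · intro hℓ
    exact ⟨List.replicate (cnt E ℓ) default, by
      rw [FE_len]; simpa using nth_cnt E hℓ⟩

lemma FE_shape (hp : (Set.Infinite {n : ℕ | ∀ k : ℕ, E n k → n ≤ k})) : ShapePresW (FE E hE A) := by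
  refine ⟨?_, ?_, ?_⟩
  · intro a b hab
    have hlen : a.length = b.length := by
      have := congrArg List.length hab
      rw [FE_len, FE_len] at this
      exact Nat.nth_injective (hpE E hp) this
    apply List.ext_getElem hlen
    intro j h1 h2
    have e1 := FE_getD_nth E hE A hp a h1
    have e2 := FE_getD_nth E hE A hp b h2
    rw [hab] at e1
    rw [List.getD_eq_getElem _ _ h1] at e1
    rw [List.getD_eq_getElem _ _ h2] at e2
    rw [← e1, ← e2]
  · intro a b hab
    rw [FE_len, FE_len, hab]
  · intro a ℓ hℓ b hb
    rw [FE_len, FE_len, hb]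
    exact ⟨(Nat.nth_lt_nth (hpE E hp)).mpr hℓ, FE_getD_nth E hE A hp a hℓ⟩

lemma FE_assoc (hp : (Set.Infinite {n : ℕ | ∀ k : ℕ, E n k → n ≤ k})) {ℓ : ℕ} (hℓ : ¬ pE E ℓ) : Assoc (FE E hE A) ℓ (hc E hE ℓ) := by
  refine ⟨?_, ?_, ?_⟩
  · rw [FE_img E hE A hp]; exact hc_pE E hE ℓ
  · have h1 := hc_le E hE ℓ
    have h2 : hc E hE ℓ ≠ ℓ := fun h => hℓ (h ▸ hc_pE E hE ℓ)
    omega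
  · intro a ha
    rw [FE_len] at ha
    rw [FE_getD E hE A a ha, FE_getD E hE A a (lt_of_le_of_lt (hc_le E hE ℓ) ha),
      hc_of_pE E hE (hc_pE E hE ℓ)]

end Surj

section Surj2
set_option linter.unusedSectionVars false
variable (E : ℕ → ℕ → Prop) (hE : Equivalence E) (A : Type*) [Inhabited A] [Fintype A]
  (hA : 2 ≤ Fintype.card A) (hp : (Set.Infinite {n : ℕ | ∀ k : ℕ, E n k → n ≤ k}))
include hA hp

lemma FE_assoc_unique {ℓ n : ℕ} (hℓ : ¬ pE E ℓ) (hn : Assoc (FE E hE A) ℓ n) :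
    n = hc E hE ℓ := by
  obtain ⟨hn1, hn2, hcopy⟩ := hn
  rw [FE_img E hE A hp] at hn1
  by_contra hne
  set i := cnt E n with hi
  set j := cnt E (hc E hE ℓ) with hj
  have hni : Nat.nth (pE E) i = n := nth_cnt E hn1
  have hjj : Nat.nth (pE E) j = hc E hE ℓ := nth_cnt E (hc_pE E hE ℓ)
  have hij : i ≠ j := fun h => hne (by rw [← hni, h, hjj])
  have hhl : hc E hE ℓ < ℓ := by
    have h1 := hc_le E hE ℓ
    have h2 : hc E hE ℓ ≠ ℓ := fun h => hℓ (h ▸ hc_pE E hE ℓ)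
    omega
  set L := ℓ + 1 with hL
  have hLl : ℓ < Nat.nth (pE E) L :=
    lt_of_lt_of_le (by omega) (Nat.le_nth (fun hf => absurd hf (hpE E hp)))
  have hiL : i < L := by
    have : Nat.nth (pE E) i < Nat.nth (pE E) L := by omega
    exact (Nat.nth_lt_nth (hpE E hp)).mp this
  have hjL : j < L := by
    have : Nat.nth (pE E) j < Nat.nth (pE E) L := by omega
    exact (Nat.nth_lt_nth (hpE E hp)).mp this
  obtain ⟨x, y, hxy⟩ := Fintype.exists_pair_of_one_lt_card (by omega : 1 < Fintype.card A)
  set a : List A := (List.replicate L x).set i y with ha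
  have hlen : a.length = L := by simp [ha]
  have hfl : (FE E hE A a).length = Nat.nth (pE E) L := by rw [FE_len, hlen]
  have hco := hcopy a (by rw [hfl]; omega)
  have hm1 : ℓ < Nat.nth (pE E) a.length := by rw [hlen]; omega
  have hm2 : n < Nat.nth (pE E) a.length := by rw [hlen]; omega
  rw [FE_getD E hE A a hm1, FE_getD E hE A a hm2, hc_of_pE E hE hn1] at hco
  have haj : a.getD j default = x := by
    rw [List.getD_eq_getElem _ _ (by omega)]
    simp only [ha, List.getElem_set, List.getElem_replicate, if_neg (fun h => hij h)]
  have hai : a.getD i default = y := by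
    rw [List.getD_eq_getElem _ _ (by omega)]
    simp [ha]
  rw [← hj, ← hi, haj, hai] at hco
  exact hxy hco

lemma FE_MCS : FE E hE A ∈ MCS A := by
  refine ⟨FE_shape E hE A hp, fun ℓ hℓ => ?_⟩
  rw [FE_img E hE A hp] at hℓ
  exact ⟨hc E hE ℓ, FE_assoc E hE A hp hℓ, fun n hn => FE_assoc_unique E hE A hA hp hℓ hn⟩

lemma FE_EF (ℓ ℓ' : ℕ) : EF (FE E hE A) ℓ ℓ' ↔ E ℓ ℓ' := by
  constructor
  · rintro (rfl | ⟨h1, h2, n, hn1, hn2⟩ | ⟨h1, h2⟩ | ⟨h1, h2⟩)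
    · exact hE.refl ℓ
    · rw [FE_img E hE A hp] at h1 h2
      have e1 := FE_assoc_unique E hE A hA hp h1 hn1
      have e2 := FE_assoc_unique E hE A hA hp h2 hn2
      exact hE.trans (e1 ▸ hc_rel E hE ℓ) (hE.symm (e2 ▸ hc_rel E hE ℓ'))
    · have h3 : ℓ' ∉ lvlImage (FE E hE A) :=
        fun hm => not_assoc_of_mem hA (FE_shape E hE A hp) hm ℓ h2
      rw [FE_img E hE A hp] at h3
      have e := FE_assoc_unique E hE A hA hp h3 h2
      exact hE.symm (e ▸ hc_rel E hE ℓ')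
    · have h3 : ℓ ∉ lvlImage (FE E hE A) :=
        fun hm => not_assoc_of_mem hA (FE_shape E hE A hp) hm ℓ' h2
      rw [FE_img E hE A hp] at h3
      have e := FE_assoc_unique E hE A hA hp h3 h2
      exact e ▸ hc_rel E hE ℓ
  · intro h
    have hcc : hc E hE ℓ = hc E hE ℓ' := hc_congr E hE h
    by_cases h1 : pE E ℓ <;> by_cases h2 : pE E ℓ'
    · left
      rw [← hc_of_pE E hE h1, ← hc_of_pE E hE h2, hcc]
    · right; right; left
      refine ⟨(FE_img E hE A hp).symm ▸ h1, ?_⟩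
      have := FE_assoc E hE A hp h2
      rwa [← hcc, hc_of_pE E hE h1] at this
    · right; right; right
      refine ⟨(FE_img E hE A hp).symm ▸ h2, ?_⟩
      have := FE_assoc E hE A hp h1
      rwa [hcc, hc_of_pE E hE h2] at this
    · right; left
      refine ⟨(FE_img E hE A hp).symm ▸ h1, (FE_img E hE A hp).symm ▸ h2,
        hc E hE ℓ, FE_assoc E hE A hp h1, hcc ▸ FE_assoc E hE A hp h2⟩

end Surj2


/-- for a finite alphabet `Σ` with at least two elements and `F ∈ M_{E^CS}`,
the relation `E_F` is an equivalence relation on `ω` each of whose classes has its minimal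
element in `F̃[ω]`; moreover `F ↦ E_F` is a bijection between `M_{E^CS}` and the
equivalence relations on `ω` all of whose classes have their minimum in the image of the
corresponding level map (equivalently, with infinitely many classes). -/
theorem stmt_15 (A : Type*) [Fintype A] [Inhabited A] (hA : 2 ≤ Fintype.card A) :
    (∀ F ∈ MCS A, Equivalence (EF F) ∧
      ∀ ℓ : ℕ, ∃ n : ℕ, EF F ℓ n ∧ n ∈ lvlImage F ∧ ∀ k : ℕ, EF F ℓ k → n ≤ k) ∧
    (∀ F ∈ MCS A, ∀ G ∈ MCS A, (∀ ℓ ℓ' : ℕ, EF F ℓ ℓ' ↔ EF G ℓ ℓ') → F = G) ∧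
    (∀ E : ℕ → ℕ → Prop, Equivalence E →
      {n : ℕ | ∀ k : ℕ, E n k → n ≤ k}.Infinite →
      ∃ F ∈ MCS A, ∀ ℓ ℓ' : ℕ, EF F ℓ ℓ' ↔ E ℓ ℓ') := by
  refine ⟨fun F hF => part1 hF hA, fun F hF G hG h => part2 hA hF hG h,
    fun E hE hp => ⟨FE E hE A, FE_MCS E hE A hA hp, fun ℓ ℓ' => FE_EF E hE A hA hp ℓ ℓ'⟩⟩
end

section
/- Let L be a relational language, B a finite ordered L-structure with vertex set n = {0,…,n−1} ordered naturally, N = 2^n − 1, and enumerate the nonempty substructures of B as B^0, …, B^{N−1} in the order ≺ (first by size, then lexicographically by vertex set). For each i let D^i be the lexicographically first substructure of B isomorphic to B^i and f^i : B^i → D^i the unique isomorphism. Define φ : n → (n+1)^N by φ(v)_i = f^i(v) if v ∈ B^i and φ(v)_i = n otherwise. Then for every v < w in B, the word φ(v) is strictly lexicographically smaller than φ(w). -/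
open FirstOrder FirstOrder.Language

/-- Lexicographic comparison of subsets of `Fin n` via their increasing enumerations. -/
def FLex {n : ℕ} (s t : Finset (Fin n)) : Prop :=
  List.Lex (· < ·) (s.sort (· ≤ ·)) (t.sort (· ≤ ·))

/-- The order `≺` on substructures (identified with their vertex sets): first by size,
then lexicographically by vertex set. -/
def Prec {n : ℕ} (s t : Finset (Fin n)) : Prop :=
  s.card < t.card ∨ (s.card = t.card ∧ FLex s t)

/-- `g` is an isomorphism from the substructure of `B` induced on `s` to the substructure
induced on `t`: a bijection `s → t` preserving all relations of `L` in both directions. -/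
def IsIsoOn (L : Language) {n : ℕ} [L.Structure (Fin n)]
    (s t : Finset (Fin n)) (g : Fin n → Fin n) : Prop :=
  Set.BijOn g ↑s ↑t ∧
  ∀ (k : ℕ) (R : L.Relations k) (x : Fin k → Fin n),
    (∀ i : Fin k, x i ∈ s) → (Structure.RelMap R x ↔ Structure.RelMap R (g ∘ x))

/-- let `B` be a finite ordered relational structure on `{0,…,n-1}` (ordered
naturally: the language contains a symbol `le` interpreted as `≤`), `N = 2^n - 1`,
`E : Fin N → Finset (Fin n)` the `≺`-increasing enumeration of the nonempty substructures
of `B`, `D i` the lexicographically first substructure isomorphic to `E i`, and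
`g i : E i → D i` the (unique) isomorphism. Define `φ(v)_i = g i v` if `v ∈ E i` and
`φ(v)_i = n` otherwise. Then `v < w` implies `φ(v)` is strictly lexicographically smaller
than `φ(w)`. -/
theorem stmt_16 (L : Language) [L.IsRelational] (n : ℕ) (hn : 0 < n)
    [L.Structure (Fin n)] (le : L.Relations 2)
    (hle : ∀ x : Fin 2 → Fin n, Structure.RelMap le x ↔ x 0 ≤ x 1)
    (N : ℕ) (hN : N = 2 ^ n - 1)
    (E : Fin N → Finset (Fin n))
    (hEne : ∀ i : Fin N, (E i).Nonempty)
    (hEsurj : ∀ s : Finset (Fin n), s.Nonempty → ∃ i : Fin N, E i = s)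
    (hEmono : ∀ i j : Fin N, i < j → Prec (E i) (E j))
    (D : Fin N → Finset (Fin n)) (g : Fin N → Fin n → Fin n)
    (hiso : ∀ i : Fin N, IsIsoOn L (E i) (D i) (g i))
    (hfirst : ∀ (i : Fin N) (t : Finset (Fin n)),
      (∃ g' : Fin n → Fin n, IsIsoOn L (E i) t g') → t = D i ∨ FLex (D i) t) :
    ∀ v w : Fin n, v < w →
      ∃ i : Fin N,
        (∀ j : Fin N, j < i →
          (if v ∈ E j then Fin.castSucc (g j v) else Fin.last n) =
          (if w ∈ E j then Fin.castSucc (g j w) else Fin.last n)) ∧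
        (if v ∈ E i then Fin.castSucc (g i v) else Fin.last n) <
        (if w ∈ E i then Fin.castSucc (g i w) else Fin.last n) := by
  intro v w hvw
  obtain ⟨i, hi⟩ := hEsurj {v} ⟨v, Finset.mem_singleton_self v⟩
  refine ⟨i, ?_, ?_⟩
  · intro j hj
    have hp := hEmono j i hj
    have hpos : 0 < (E j).card := Finset.card_pos.mpr (hEne j)
    have hci : (E i).card = 1 := by rw [hi]; simp
    have hcj : (E j).card = 1 ∧ FLex (E j) (E i) := by
      rcases hp with h | ⟨h, hf⟩
      · omega
      · exact ⟨by omega, hf⟩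
    obtain ⟨u, hu⟩ := Finset.card_eq_one.mp hcj.1
    have hflex := hcj.2
    rw [hu, hi] at hflex
    unfold FLex at hflex
    simp only [Finset.sort_singleton] at hflex
    have huv : u < v := by
      cases hflex with
      | rel h => exact h
      | cons h => cases h
    have hvj : v ∉ E j := by rw [hu]; simp; exact (ne_of_gt huv)
    have hwj : w ∉ E j := by
      rw [hu]; simp; exact (ne_of_gt (huv.trans hvw))
    rw [if_neg hvj, if_neg hwj]
  · have hvi : v ∈ E i := by rw [hi]; simp
    have hwi : w ∉ E i := by rw [hi]; simp; exact (ne_of_gt hvw)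
    rw [if_pos hvi, if_neg hwi]
    exact Fin.castSucc_lt_last _
end
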